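/- In the setting of an action β of G on B and a conditional expectation F onto A with FF_t = F_tF for all t, the map V defined by V_t = Fβ_t|_A is an interaction group if and only if F(β_t(1_A)) = 1_A for all t ∈ G. -/

import Mathlib

variable {B : Type*} [NormedRing B] [StarRing B] [CStarRing B] [NormedAlgebra ℂ B]
  [CompleteSpace B] [PartialOrder B] [StarOrderedRing B]

/-- `F` is a conditional expectation of `B` onto the subset `A`. -/
def IsCondExpOnto (F : B →L[ℂ] B) (A : Set B) : Prop :=
  (∀ b : B, 0 ≤ b → 0 ≤ F b) ∧ (∀ b : B, F (F b) = F b) ∧ Set.range F = A ∧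
    ∀ a ∈ A, ∀ b : B, F (a * b) = a * F b ∧ F (b * a) = F b * a

/-- `V` is an interaction group of `G` on the unital C*-subalgebra `A` (with unit `oneA`):
a partial representation on `A` by positive maps fixing the unit, which is multiplicative
whenever one of the factors lies in the range of `V_{t⁻¹}`. -/
def IsInteractionGroupOn {G : Type*} [Group G] (V : G → B → B) (A : Set B) (oneA : B) :
    Prop :=
  (∀ t : G, ∀ a ∈ A, V t a ∈ A) ∧
  (∀ a ∈ A, V 1 a = a) ∧
  (∀ s t : G, ∀ a ∈ A, V s⁻¹ (V s (V t a)) = V s⁻¹ (V (s * t) a)) ∧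
  (∀ s t : G, ∀ a ∈ A, V s (V t (V t⁻¹ a)) = V (s * t) (V t⁻¹ a)) ∧
  (∀ t : G, ∀ a ∈ A, 0 ≤ a → 0 ≤ V t a) ∧
  (∀ t : G, V t oneA = oneA) ∧
  (∀ t : G, ∀ a ∈ A, ∀ b ∈ A,
    ((∃ c ∈ A, a = V t⁻¹ c) ∨ (∃ c ∈ A, b = V t⁻¹ c)) → V t (a * b) = V t a * V t b)

/-- With `F` a conditional expectation onto `A` (whose unit is `F 1`), `β` an action of
`G` on `B`, and `F_t := β_t F β_{t⁻¹}` commuting with `F` for every `t`, the map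
`V_t := F ∘ β_t |_A` is an interaction group if and only if `F(β_t(1_A)) = 1_A` for all
`t ∈ G`. -/
lemma aux_starAlgEquiv_nonneg (e : B ≃⋆ₐ[ℂ] B) {b : B} (hb : 0 ≤ b) : 0 ≤ e b := by
  rw [StarOrderedRing.nonneg_iff] at hb ⊢
  induction hb using AddSubmonoid.closure_induction with
  | mem x hx =>
    obtain ⟨s, rfl⟩ := hx
    exact AddSubmonoid.subset_closure ⟨e s, by rw [map_mul, map_star]⟩
  | zero => simpa using AddSubmonoid.zero_mem _
  | add x y hx hy hx' hy' => simpa [map_add] using AddSubmonoid.add_mem _ hx' hy'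

theorem interaction_group_iff_unital (G : Type*) [Group G]
    (F : B →L[ℂ] B) (A : Set B) (hF : IsCondExpOnto F A)
    (β : G → B ≃⋆ₐ[ℂ] B)
    (hβ1 : ∀ b : B, β 1 b = b)
    (hβmul : ∀ (s t : G) (b : B), β (s * t) b = β s (β t b))
    (hcomm : ∀ (t : G) (b : B), F (β t (F ((β t).symm b))) = β t (F ((β t).symm (F b))))
    (V : G → B → B) (hV : ∀ (t : G) (b : B), V t b = F (β t b)) :
    IsInteractionGroupOn V A (F 1) ↔ ∀ t : G, F (β t (F 1)) = F 1 := by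
  obtain ⟨hpos, hidem, hrange, hbimod⟩ := hF
  have hinv : ∀ (t : G) (b : B), β t⁻¹ (β t b) = b := by
    intro t b; rw [← hβmul, inv_mul_cancel, hβ1]
  have hsymm : ∀ (t : G) (b : B), (β t).symm b = β t⁻¹ b := by
    intro t b
    have h3 : β t (β t⁻¹ b) = b := by rw [← hβmul, mul_inv_cancel, hβ1]
    conv_lhs => rw [← h3]
    exact (β t).symm_apply_apply _
  have hcomm' : ∀ (t : G) (b : B), F (β t (F (β t⁻¹ b))) = β t (F (β t⁻¹ (F b))) := by
    intro t b; have := hcomm t b; rwa [hsymm, hsymm] at this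
  have hmemA : ∀ a ∈ A, F a = a := by
    intro a ha
    rw [← hrange] at ha; obtain ⟨b, rfl⟩ := ha; exact hidem b
  have hFA : ∀ b : B, F b ∈ A := fun b => hrange ▸ ⟨b, rfl⟩
  constructor
  · intro h t
    have := h.2.2.2.2.2.1 t
    rwa [hV] at this
  · intro h1
    refine ⟨?_, ?_, ?_, ?_, ?_, ?_, ?_⟩
    · intro t a _; rw [hV]; exact hFA _
    · intro a ha; rw [hV, hβ1]; exact hmemA a ha
    · intro s t a _
      simp only [hV]
      have key : F (β s (F (β t a))) = β s (F (β s⁻¹ (F (β s (β t a))))) := by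
        have h2 := hcomm' s (β s (β t a))
        rwa [hinv] at h2
      rw [key, hinv, hidem, hβmul]
    · intro s t a ha
      simp only [hV, hβmul]
      rw [hcomm' t a, hmemA a ha]
    · intro t a _ hpa
      rw [hV]; exact hpos _ (aux_starAlgEquiv_nonneg (β t) hpa)
    · intro t; rw [hV]; exact h1 t
    · intro t a ha b hb hor
      simp only [hV] at hor ⊢
      rcases hor with ⟨c, hc, rfl⟩ | ⟨c, hc, rfl⟩
      · -- a = F (β t⁻¹ c)
        have hfix : F (β t (F (β t⁻¹ c))) = β t (F (β t⁻¹ c)) := by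
          rw [hcomm' t c, hmemA c hc]
        have hmem : β t (F (β t⁻¹ c)) ∈ A := hfix ▸ hFA _
        rw [map_mul, (hbimod _ hmem (β t b)).1, hfix]
      · have hfix : F (β t (F (β t⁻¹ c))) = β t (F (β t⁻¹ c)) := by
          rw [hcomm' t c, hmemA c hc]
        have hmem : β t (F (β t⁻¹ c)) ∈ A := hfix ▸ hFA _
        rw [map_mul, (hbimod _ hmem (β t a)).2, hfix]
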